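/- For Y ~ N(θ, 1) truncated to |Y| ≥ c (with c > 0), the map θ ↦ E_θ[X] is strictly increasing in θ, where E_θ[X] = θ + (φ(c-θ) - φ(-c-θ))/Q_c(θ) and Q_c(θ) = Φ(θ-c) + Φ(-θ-c). -/

import Mathlib

open MeasureTheory Set Filter Topology

noncomputable def phi (x : ℝ) : ℝ := (Real.sqrt (2 * Real.pi))⁻¹ * Real.exp (-x ^ 2 / 2)

lemma phi_pos (x : ℝ) : 0 < phi x := by
  have : (0:ℝ) < Real.sqrt (2 * Real.pi) := Real.sqrt_pos.2 (by positivity)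
  exact mul_pos (inv_pos.2 this) (Real.exp_pos _)

lemma phi_even (x : ℝ) : phi (-x) = phi x := by simp [phi]

lemma continuous_phi : Continuous phi := by
  unfold phi; fun_prop

lemma integrable_phi : Integrable phi := by
  have h : Integrable (fun x : ℝ => Real.exp (-(1/2) * x ^ 2)) :=
    integrable_exp_neg_mul_sq (by norm_num)
  have := h.const_mul (Real.sqrt (2 * Real.pi))⁻¹
  refine this.congr (Eventually.of_forall fun x => ?_)
  unfold phi; ring_nf

lemma integrable_mul_phi : Integrable (fun x : ℝ => x * phi x) := by
  have h : Integrable (fun x : ℝ => x * Real.exp (-(1/2) * x ^ 2)) :=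
    integrable_mul_exp_neg_mul_sq (by norm_num)
  have := h.const_mul (Real.sqrt (2 * Real.pi))⁻¹
  refine this.congr (Eventually.of_forall fun x => ?_)
  unfold phi; ring_nf

lemma integrable_sq_mul_phi : Integrable (fun x : ℝ => x ^ 2 * phi x) := by
  have h : Integrable (fun x : ℝ => x ^ 2 * Real.exp (-(1/2) * x ^ 2)) := by
    have h0 := integrable_rpow_mul_exp_neg_mul_sq (b := 1/2) (by norm_num) (s := 2) (by norm_num)
    refine h0.congr (Eventually.of_forall fun x => ?_)
    norm_num [show ((2:ℝ) = ((2:ℕ):ℝ)) by norm_num, Real.rpow_natCast]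
  have := h.const_mul (Real.sqrt (2 * Real.pi))⁻¹
  refine this.congr (Eventually.of_forall fun x => ?_)
  unfold phi; ring_nf

noncomputable def Phi (x : ℝ) : ℝ := ∫ t in Iic x, phi t

lemma hasDerivAt_phi (x : ℝ) : HasDerivAt phi (-x * phi x) x := by
  have h1 : HasDerivAt (fun y : ℝ => -y ^ 2 / 2) (-x) x := by
    have : HasDerivAt (fun y : ℝ => y ^ 2) (2 * x) x := by
      simpa using (hasDerivAt_pow 2 x)
    have := (this.neg.div_const 2)
    exact this.congr_deriv (by ring)
  have h2 := (h1.exp).const_mul (Real.sqrt (2 * Real.pi))⁻¹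
  refine h2.congr_deriv ?_
  unfold phi; ring

lemma hasDerivAt_Phi (x : ℝ) : HasDerivAt Phi (phi x) x := by
  have hfun : Phi = fun u => Phi 0 + ∫ t in (0:ℝ)..u, phi t := by
    funext u
    rw [← intervalIntegral.integral_Iic_sub_Iic integrable_phi.integrableOn
      integrable_phi.integrableOn]
    unfold Phi; ring
  rw [hfun]
  have h := intervalIntegral.integral_hasStrictDerivAt_right
    (integrable_phi.intervalIntegrable (a := 0) (b := x))
    (continuous_phi.stronglyMeasurableAtFilter volume (nhds x))
    continuous_phi.continuousAt
  exact (h.hasDerivAt.const_add (Phi 0))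

lemma Phi_pos (x : ℝ) : 0 < Phi x := by
  rw [show Phi x = ∫ t in Iic x, phi t from rfl]
  refine (setIntegral_pos_iff_support_of_nonneg_ae ?_ integrable_phi.integrableOn).2 ?_
  · exact Eventually.of_forall fun t => (phi_pos t).le
  · have : Function.support phi ∩ Iic x = Iic x := by
      apply inter_eq_right.2
      intro t _
      exact (phi_pos t).ne'
    rw [this]
    simp

lemma tendsto_phi_atTop : Tendsto phi atTop (𝓝 0) := by
  have h1 : Tendsto (fun x : ℝ => -x ^ 2 / 2) atTop atBot := by
    apply Tendsto.atBot_div_const (by norm_num)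
    exact tendsto_neg_atBot_iff.mpr (tendsto_pow_atTop (by norm_num))
  have := (Real.tendsto_exp_atBot.comp h1).const_mul (Real.sqrt (2 * Real.pi))⁻¹
  simp only [mul_zero] at this
  refine this.congr fun x => ?_
  simp only [Function.comp]
  rfl

lemma tendsto_phi_atBot : Tendsto phi atBot (𝓝 0) := by
  have h := tendsto_phi_atTop.comp tendsto_neg_atBot_atTop
  refine h.congr fun x => ?_
  simp [Function.comp, phi_even]

lemma tendsto_mul_phi_atTop : Tendsto (fun x : ℝ => x * phi x) atTop (𝓝 0) := by
  have hub : Tendsto (fun x : ℝ => (Real.sqrt (2 * Real.pi))⁻¹ * Real.exp (x - x ^ 2 / 2))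
      atTop (𝓝 0) := by
    have h1 : Tendsto (fun x : ℝ => x - x ^ 2 / 2) atTop atBot := by
      have : (fun x : ℝ => x - x ^ 2 / 2) = fun x : ℝ => x * (1 - x / 2) := by
        funext x; ring
      rw [this]
      exact Tendsto.atTop_mul_atBot₀ tendsto_id
        (tendsto_atBot_add_const_left _ _ (tendsto_neg_atBot_iff.mpr
          (tendsto_id.atTop_div_const (by norm_num))))
    simpa using (Real.tendsto_exp_atBot.comp h1).const_mul (Real.sqrt (2 * Real.pi))⁻¹
  refine tendsto_of_tendsto_of_tendsto_of_le_of_le' tendsto_const_nhds hub ?_ ?_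
  · filter_upwards [eventually_ge_atTop (0:ℝ)] with x hx
    exact mul_nonneg hx (phi_pos x).le
  · filter_upwards [eventually_ge_atTop (0:ℝ)] with x hx
    have hxe : x ≤ Real.exp x := (Real.add_one_le_exp x).trans' (by linarith)
    calc x * phi x = (Real.sqrt (2 * Real.pi))⁻¹ * (x * Real.exp (-x ^ 2 / 2)) := by
          unfold phi; ring
      _ ≤ (Real.sqrt (2 * Real.pi))⁻¹ * (Real.exp x * Real.exp (-x ^ 2 / 2)) := by
          have h0 : (0:ℝ) < Real.sqrt (2 * Real.pi) := Real.sqrt_pos.2 (by positivity)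
          apply mul_le_mul_of_nonneg_left _ (inv_pos.2 h0).le
          exact mul_le_mul_of_nonneg_right hxe (Real.exp_pos _).le
      _ = (Real.sqrt (2 * Real.pi))⁻¹ * Real.exp (x - x ^ 2 / 2) := by
          rw [← Real.exp_add]; ring_nf

lemma tendsto_mul_phi_atBot : Tendsto (fun x : ℝ => x * phi x) atBot (𝓝 0) := by
  have h := (tendsto_mul_phi_atTop.neg).comp tendsto_neg_atBot_atTop
  simp only [neg_zero] at h
  refine h.congr fun x => ?_
  simp [Function.comp, phi_even]

lemma integral_Ici_phi (a : ℝ) : ∫ x in Ici a, phi x = Phi (-a) := by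
  have h := integral_comp_neg_Iic (-a) phi
  have h2 : (∫ x in Iic (-a), phi (-x)) = ∫ x in Iic (-a), phi x :=
    setIntegral_congr_fun measurableSet_Iic fun x _ => phi_even x
  simp only [neg_neg] at h
  show _ = ∫ x in Iic (-a), phi x
  rw [integral_Ici_eq_integral_Ioi, ← h2, h]

lemma integral_Ici_mul_phi (a : ℝ) : ∫ x in Ici a, x * phi x = phi a := by
  rw [integral_Ici_eq_integral_Ioi]
  have h := integral_Ioi_of_hasDerivAt_of_tendsto (f := fun x => -phi x)
    (f' := fun x => x * phi x) (a := a) (m := 0)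
    (continuous_phi.neg.continuousWithinAt)
    (fun x _ => (hasDerivAt_phi x).neg.congr_deriv (by ring))
    integrable_mul_phi.integrableOn
    (by simpa using tendsto_phi_atTop.neg)
  simpa using h

lemma integral_Iic_mul_phi (b : ℝ) : ∫ x in Iic b, x * phi x = -phi b := by
  have h := integral_Iic_of_hasDerivAt_of_tendsto (f := fun x => -phi x)
    (f' := fun x => x * phi x) (a := b) (m := 0)
    (continuous_phi.neg.continuousWithinAt)
    (fun x _ => (hasDerivAt_phi x).neg.congr_deriv (by ring))
    integrable_mul_phi.integrableOn
    (by simpa using tendsto_phi_atBot.neg)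
  simpa using h

lemma hasDerivAt_mul_phi (x : ℝ) :
    HasDerivAt (fun x : ℝ => x * phi x) (phi x - x ^ 2 * phi x) x := by
  have h := (hasDerivAt_id x).mul (hasDerivAt_phi x)
  refine h.congr_deriv ?_
  simp only [id_eq, one_mul]
  ring

lemma integral_Ici_one_sub_sq (a : ℝ) :
    ∫ x in Ici a, (phi x - x ^ 2 * phi x) = -(a * phi a) := by
  rw [integral_Ici_eq_integral_Ioi]
  have h := integral_Ioi_of_hasDerivAt_of_tendsto (f := fun x => x * phi x)
    (f' := fun x => phi x - x ^ 2 * phi x) (a := a) (m := 0)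
    ((continuous_id.mul continuous_phi).continuousWithinAt)
    (fun x _ => hasDerivAt_mul_phi x)
    (integrable_phi.sub integrable_sq_mul_phi).integrableOn
    tendsto_mul_phi_atTop
  simpa using h

lemma integral_Iic_one_sub_sq (b : ℝ) :
    ∫ x in Iic b, (phi x - x ^ 2 * phi x) = b * phi b := by
  have h := integral_Iic_of_hasDerivAt_of_tendsto (f := fun x => x * phi x)
    (f' := fun x => phi x - x ^ 2 * phi x) (a := b) (m := 0)
    ((continuous_id.mul continuous_phi).continuousWithinAt)
    (fun x _ => hasDerivAt_mul_phi x)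
    (integrable_phi.sub integrable_sq_mul_phi).integrableOn
    tendsto_mul_phi_atBot
  simpa using h

lemma integral_Ici_sq_mul_phi (a : ℝ) :
    ∫ x in Ici a, x ^ 2 * phi x = Phi (-a) + a * phi a := by
  have hsub : ∫ x in Ici a, (phi x - x ^ 2 * phi x) =
      (∫ x in Ici a, phi x) - ∫ x in Ici a, x ^ 2 * phi x :=
    integral_sub integrable_phi.integrableOn integrable_sq_mul_phi.integrableOn
  have h1 := integral_Ici_one_sub_sq a
  rw [hsub, integral_Ici_phi] at h1
  linarith

lemma integral_Iic_sq_mul_phi (b : ℝ) :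
    ∫ x in Iic b, x ^ 2 * phi x = Phi b - b * phi b := by
  have hsub : ∫ x in Iic b, (phi x - x ^ 2 * phi x) =
      (∫ x in Iic b, phi x) - ∫ x in Iic b, x ^ 2 * phi x :=
    integral_sub integrable_phi.integrableOn integrable_sq_mul_phi.integrableOn
  have h1 := integral_Iic_one_sub_sq b
  rw [hsub] at h1
  have : (∫ x in Iic b, phi x) = Phi b := rfl
  rw [this] at h1
  linarith

lemma key_ineq {a b : ℝ} (hba : b < a) :
    (phi a - phi b) ^ 2 < (Phi (-a) + Phi b) * ((Phi (-a) + Phi b) + a * phi a - b * phi b) := by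
  set QS : ℝ := Phi (-a) + Phi b with hQSdef
  set I1 : ℝ := phi a - phi b with hI1def
  set I2 : ℝ := QS + a * phi a - b * phi b with hI2def
  have hQS : 0 < QS := add_pos (Phi_pos _) (Phi_pos _)
  set S : Set ℝ := Iic b ∪ Ici a with hSdef
  have hdisj : Disjoint (Iic b) (Ici a) := Iic_disjoint_Ici.2 (not_le.2 hba)
  have hmeas : MeasurableSet (Ici a) := measurableSet_Ici
  have hSint : ∀ g : ℝ → ℝ, Integrable g →
      ∫ x in S, g x = (∫ x in Iic b, g x) + ∫ x in Ici a, g x := fun g hg =>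
    setIntegral_union hdisj hmeas hg.integrableOn hg.integrableOn
  have hQSeq : ∫ x in S, phi x = QS := by
    rw [hSint phi integrable_phi, integral_Ici_phi]
    show Phi b + _ = _
    ring
  have hI1eq : ∫ x in S, x * phi x = I1 := by
    rw [hSint _ integrable_mul_phi, integral_Ici_mul_phi, integral_Iic_mul_phi]
    ring
  have hI2eq : ∫ x in S, x ^ 2 * phi x = I2 := by
    rw [hSint _ integrable_sq_mul_phi, integral_Ici_sq_mul_phi, integral_Iic_sq_mul_phi]
    show Phi b - b * phi b + (Phi (-a) + a * phi a) = QS + a * phi a - b * phi b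
    rw [hQSdef]; ring
  set m : ℝ := I1 / QS with hmdef
  have hVeq : ∫ x in S, (x - m) ^ 2 * phi x = I2 - 2 * m * I1 + m ^ 2 * QS := by
    have hexp : ∀ x : ℝ, (x - m) ^ 2 * phi x
        = x ^ 2 * phi x - 2 * m * (x * phi x) + m ^ 2 * phi x := fun x => by ring
    have hint1 : Integrable (fun x : ℝ => x ^ 2 * phi x - 2 * m * (x * phi x)) := by
      exact integrable_sq_mul_phi.sub (integrable_mul_phi.const_mul (2*m))
    have hint2 : Integrable (fun x : ℝ => m ^ 2 * phi x) := integrable_phi.const_mul (m^2)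
    have hint3 : Integrable (fun x : ℝ => 2 * m * (x * phi x)) :=
      integrable_mul_phi.const_mul (2*m)
    rw [integral_congr_ae (Eventually.of_forall fun x => hexp x),
      integral_add hint1.integrableOn hint2.integrableOn,
      integral_sub integrable_sq_mul_phi.integrableOn hint3.integrableOn,
      integral_const_mul, integral_const_mul, hQSeq, hI1eq, hI2eq]
  have hVpos : 0 < ∫ x in S, (x - m) ^ 2 * phi x := by
    have hint : IntegrableOn (fun x => (x - m) ^ 2 * phi x) S := by
      have : Integrable (fun x : ℝ => (x - m) ^ 2 * phi x) := by
        have hexp : ∀ x : ℝ, (x - m) ^ 2 * phi x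
            = x ^ 2 * phi x - 2 * m * (x * phi x) + m ^ 2 * phi x := fun x => by ring
        have h0 : Integrable (fun x : ℝ => x ^ 2 * phi x - 2 * m * (x * phi x)
            + m ^ 2 * phi x) := by
          exact (integrable_sq_mul_phi.sub (integrable_mul_phi.const_mul (2*m))).add
            (integrable_phi.const_mul (m^2))
        exact h0.congr (Eventually.of_forall fun x => (hexp x).symm)
      exact this.integrableOn
    refine (setIntegral_pos_iff_support_of_nonneg_ae ?_ hint).2 ?_
    · exact Eventually.of_forall fun x => mul_nonneg (sq_nonneg _) (phi_pos x).le
    · have hsub : Ioi (max a m) ⊆ Function.support (fun x => (x - m) ^ 2 * phi x) ∩ S := by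
        intro x hx
        rw [mem_Ioi, max_lt_iff] at hx
        constructor
        · apply mul_ne_zero
          · exact pow_ne_zero _ (sub_ne_zero.2 hx.2.ne')
          · exact (phi_pos x).ne'
        · exact Or.inr (le_of_lt hx.1)
      have hm := measure_mono (μ := (volume : Measure ℝ)) hsub
      rw [Real.volume_Ioi] at hm
      exact lt_of_lt_of_le (by simp) hm
  rw [hVeq] at hVpos
  have hmul : QS * (I2 - 2 * m * I1 + m ^ 2 * QS) = QS * I2 - I1 ^ 2 := by
    rw [hmdef]; field_simp; ring
  nlinarith [mul_pos hQS hVpos]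


/-- `Q_c(θ) = Φ(θ-c) + Φ(-θ-c) = P(|N(θ,1)| ≥ c)`. -/
noncomputable def Qc (c θ : ℝ) : ℝ := Phi (θ - c) + Phi (-θ - c)

/-- the truncated-normal conditional mean
`θ ↦ E_θ[X] = θ + (φ(c-θ) - φ(-c-θ))/Q_c(θ)` is strictly increasing in `θ`. -/
theorem truncated_normal_mean_strictMono (c : ℝ) (hc : 0 < c) :
    StrictMono (fun θ : ℝ => θ + (phi (c - θ) - phi (-c - θ)) / Qc c θ) := by
  apply strictMono_of_deriv_pos
  intro θ
  have hu : HasDerivAt (fun y : ℝ => c - y) (-1) θ := by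
    simpa using (hasDerivAt_id θ).const_sub c
  have hv : HasDerivAt (fun y : ℝ => -c - y) (-1) θ := by
    simpa using (hasDerivAt_id θ).const_sub (-c)
  have h1 : HasDerivAt (fun θ : ℝ => phi (c - θ)) ((c - θ) * phi (c - θ)) θ := by
    have h := HasDerivAt.comp θ (hasDerivAt_phi (c - θ)) hu
    exact h.congr_deriv (by ring)
  have h2 : HasDerivAt (fun θ : ℝ => phi (-c - θ)) ((-c - θ) * phi (-c - θ)) θ := by
    have h := HasDerivAt.comp θ (hasDerivAt_phi (-c - θ)) hv
    exact h.congr_deriv (by ring)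
  have hw : HasDerivAt (fun y : ℝ => y - c) 1 θ := (hasDerivAt_id θ).sub_const c
  have hz : HasDerivAt (fun y : ℝ => -y - c) (-1) θ := by
    simpa using (hasDerivAt_id θ).neg.sub_const c
  have hQ1 : HasDerivAt (fun θ : ℝ => Phi (θ - c)) (phi (θ - c)) θ := by
    have h := HasDerivAt.comp θ (hasDerivAt_Phi (θ - c)) hw
    exact h.congr_deriv (by ring)
  have hQ2 : HasDerivAt (fun θ : ℝ => Phi (-θ - c)) (-phi (-θ - c)) θ := by
    have h := HasDerivAt.comp θ (hasDerivAt_Phi (-θ - c)) hz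
    exact h.congr_deriv (by ring)
  have e1 : phi (θ - c) = phi (c - θ) := by
    rw [show θ - c = -(c - θ) by ring, phi_even]
  have e2 : phi (-θ - c) = phi (-c - θ) := by
    rw [show -θ - c = -c - θ by ring]
  have hQd : HasDerivAt (fun θ : ℝ => Qc c θ) (phi (c - θ) - phi (-c - θ)) θ := by
    have h := hQ1.add hQ2
    have : phi (θ - c) + -phi (-θ - c) = phi (c - θ) - phi (-c - θ) := by
      rw [e1, e2]; ring
    rw [this] at h
    exact h
  have hQpos : 0 < Qc c θ := add_pos (Phi_pos _) (Phi_pos _)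
  have hN : HasDerivAt (fun θ : ℝ => phi (c - θ) - phi (-c - θ))
      ((c - θ) * phi (c - θ) - (-c - θ) * phi (-c - θ)) θ := h1.sub h2
  have hdiv := hN.div hQd hQpos.ne'
  have hF := (hasDerivAt_id θ).add hdiv
  change HasDerivAt (fun θ : ℝ => θ + (phi (c - θ) - phi (-c - θ)) / Qc c θ) _ θ at hF
  rw [hF.deriv]
  have key := key_ineq (a := c - θ) (b := -c - θ) (by linarith)
  have eQ : Phi (-(c - θ)) + Phi (-c - θ) = Qc c θ := by
    rw [show -(c - θ) = θ - c by ring, show (-c - θ : ℝ) = -θ - c by ring]; rfl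
  rw [eQ] at key
  set q := Qc c θ with hq
  set n := phi (c - θ) - phi (-c - θ) with hn
  set n' := (c - θ) * phi (c - θ) - (-c - θ) * phi (-c - θ) with hn'
  have key2 : n ^ 2 < q * (q + n') := by
    calc n ^ 2 < q * (q + (c - θ) * phi (c - θ) - (-c - θ) * phi (-c - θ)) := key
      _ = q * (q + n') := by rw [hn']; ring
  have hq2 : (0:ℝ) < q ^ 2 := pow_pos hQpos 2
  have hval : (1:ℝ) + (n' * q - n * n) / q ^ 2 = (q * (q + n') - n ^ 2) / q ^ 2 := by
    field_simp; ring
  rw [hval]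
  exact div_pos (by nlinarith) hq2
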